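/- A metric space (X,d) has intrinsic metric if and only if for all x, y ∈ X and every ε > 0 the set ω(x,y,ε) = {z ∈ X : 2·max(d(x,z), d(z,y)) < d(x,y) + ε} is nonempty. -/

import Mathlib

open Finset

/-- Iterated bisection: from the midpoint-ish property we build chains of length `2^n`. -/
private lemma chain_claim {X : Type*} [MetricSpace X]
    (H : ∀ x y : X, ∀ ε > (0 : ℝ), ∃ z : X, 2 * max (dist x z) (dist z y) < dist x y + ε)
    (n : ℕ) :
    ∀ x y : X, ∀ ε > (0 : ℝ), ∃ z : ℕ → X, z 0 = x ∧ z (2 ^ n) = y ∧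
      (∀ i < 2 ^ n, dist (z i) (z (i + 1)) < (dist x y + ε) / 2 ^ n) ∧
      (∑ i ∈ range (2 ^ n), dist (z i) (z (i + 1))) < dist x y + ε := by
  induction n with
  | zero =>
    intro x y ε hε
    refine ⟨fun i => if i = 0 then x else y, rfl, rfl, ?_, ?_⟩
    · intro i hi
      interval_cases i
      norm_num
      linarith
    · norm_num
      linarith
  | succ n IH =>
    intro x y ε hε
    obtain ⟨m, hm⟩ := H x y (ε / 2) (by linarith)
    have ha : dist x m < (dist x y + ε / 2) / 2 := by
      have := le_max_left (dist x m) (dist m y); linarith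
    have hb : dist m y < (dist x y + ε / 2) / 2 := by
      have := le_max_right (dist x m) (dist m y); linarith
    have hP : (0 : ℝ) < 2 ^ n := by positivity
    have h1P : (1 : ℝ) ≤ 2 ^ n := one_le_pow₀ (by norm_num)
    set εn : ℝ := ε / (4 * 2 ^ n) with hεn
    have hεn0 : 0 < εn := by positivity
    have hεn4 : εn ≤ ε / 4 := by
      rw [hεn]
      apply div_le_div_of_nonneg_left hε.le (by norm_num)
      nlinarith
    obtain ⟨z1, h10, h1k, h1s, h1sum⟩ := IH x m εn hεn0
    obtain ⟨z2, h20, h2k, h2s, h2sum⟩ := IH m y εn hεn0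
    set w : ℕ → X := fun i => if i < 2 ^ n then z1 i else z2 (i - 2 ^ n) with hw
    have hw1 : ∀ i < 2 ^ n, w i = z1 i := fun i hi => if_pos hi
    have hw2 : ∀ i, w (2 ^ n + i) = z2 i := by
      intro i
      have : ¬ (2 ^ n + i < 2 ^ n) := by omega
      simp [hw, this]
    have hstep1 : ∀ i < 2 ^ n, dist (w i) (w (i + 1)) = dist (z1 i) (z1 (i + 1)) := by
      intro i hi
      rw [hw1 i hi]
      by_cases h : i + 1 < 2 ^ n
      · rw [hw1 _ h]
      · have hi1 : i + 1 = 2 ^ n := by omega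
        have : w (i + 1) = z2 0 := by
          have := hw2 0
          simpa [hi1] using this
        rw [this, h20, ← h1k, hi1]
    have hstep2 : ∀ i, dist (w (2 ^ n + i)) (w (2 ^ n + i + 1)) = dist (z2 i) (z2 (i + 1)) := by
      intro i
      have h2 : 2 ^ n + i + 1 = 2 ^ n + (i + 1) := by omega
      rw [hw2 i, h2, hw2 (i + 1)]
    have hpow : 2 ^ (n + 1) = 2 ^ n + 2 ^ n := by omega
    have hpowR : ((2 : ℝ) ^ (n + 1)) = 2 * 2 ^ n := by rw [pow_succ]; ring
    -- key numeric bounds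
    have hkey1 : dist x m + εn ≤ (dist x y + ε) / 2 := by linarith
    have hkey2 : dist m y + εn ≤ (dist x y + ε) / 2 := by linarith
    refine ⟨w, ?_, ?_, ?_, ?_⟩
    · rw [hw1 0 (by positivity), h10]
    · have : 2 ^ (n + 1) = 2 ^ n + 2 ^ n := hpow
      rw [this, hw2, h2k]
    · intro i hi
      have hbound : (dist x y + ε) / 2 / 2 ^ n = (dist x y + ε) / 2 ^ (n + 1) := by
        rw [div_div, hpowR]
      by_cases h : i < 2 ^ n
      · rw [hstep1 i h]
        calc dist (z1 i) (z1 (i + 1)) < (dist x m + εn) / 2 ^ n := h1s i h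
          _ ≤ (dist x y + ε) / 2 / 2 ^ n := by
              exact div_le_div_of_nonneg_right hkey1 hP.le
          _ = (dist x y + ε) / 2 ^ (n + 1) := hbound
      · obtain ⟨j, rfl⟩ : ∃ j, i = 2 ^ n + j := ⟨i - 2 ^ n, by omega⟩
        have hj : j < 2 ^ n := by omega
        rw [hstep2 j]
        calc dist (z2 j) (z2 (j + 1)) < (dist m y + εn) / 2 ^ n := h2s j hj
          _ ≤ (dist x y + ε) / 2 / 2 ^ n := by
              exact div_le_div_of_nonneg_right hkey2 hP.le
          _ = (dist x y + ε) / 2 ^ (n + 1) := hbound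
    · rw [hpow, Finset.sum_range_add]
      have e1 : ∑ i ∈ range (2 ^ n), dist (w i) (w (i + 1))
          = ∑ i ∈ range (2 ^ n), dist (z1 i) (z1 (i + 1)) :=
        Finset.sum_congr rfl fun i hi => hstep1 i (Finset.mem_range.mp hi)
      have e2 : ∑ i ∈ range (2 ^ n), dist (w (2 ^ n + i)) (w (2 ^ n + i + 1))
          = ∑ i ∈ range (2 ^ n), dist (z2 i) (z2 (i + 1)) :=
        Finset.sum_congr rfl fun i _ => hstep2 i
      rw [e1, e2]
      linarith

/-- A metric space has intrinsic metric iff for all `x y` and every `ε > 0`,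
the set `ω(x,y,ε) = {z | 2 * max (d x z) (d z y) < d x y + ε}` is nonempty. -/
theorem intrinsic_iff_midpointish {X : Type*} [MetricSpace X] :
    (∀ x y : X, ∀ ε > (0 : ℝ), ∃ (k : ℕ) (z : ℕ → X), z 0 = x ∧ z k = y ∧
      (∀ i < k, dist (z i) (z (i + 1)) < ε) ∧
      (∑ i ∈ Finset.range k, dist (z i) (z (i + 1))) < dist x y + ε) ↔
    (∀ x y : X, ∀ ε > (0 : ℝ),
      ({z : X | 2 * max (dist x z) (dist z y) < dist x y + ε}).Nonempty) := by
  constructor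
  · intro H x y ε hε
    obtain ⟨k, z, hz0, hzk, hstep, hsum⟩ := H x y (ε / 3) (by linarith)
    set S : ℕ → ℝ := fun i => ∑ j ∈ range i, dist (z j) (z (j + 1)) with hS
    have hSmono : ∀ i ≤ k, S i ≤ S k := by
      intro i hi
      apply Finset.sum_le_sum_of_subset_of_nonneg (Finset.range_subset_range.mpr hi)
      intro j _ _; exact dist_nonneg
    have hL0 : 0 ≤ S k := Finset.sum_nonneg fun _ _ => dist_nonneg
    classical
    set P : ℕ → Prop := fun i => 2 * S i ≤ S k with hPdef
    have hP0 : P 0 := by simp [hPdef, hS]; exact hL0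
    set i := Nat.findGreatest P k with hi
    have hPi : P i := Nat.findGreatest_spec (Nat.zero_le k) hP0
    have hik : i ≤ k := Nat.findGreatest_le k
    refine ⟨z i, ?_⟩
    have hxz : dist x (z i) ≤ S i := by
      rw [← hz0]; exact dist_le_range_sum_dist z i
    have hzy : dist (z i) y ≤ S k - S i := by
      rw [← hzk]
      have hik' : i + (k - i) = k := by omega
      have h1 : dist (z i) (z k) ≤ ∑ j ∈ range (k - i), dist (z (i + j)) (z (i + j + 1)) := by
        have := dist_le_range_sum_dist (fun j => z (i + j)) (k - i)
        simpa [hik', add_assoc] using this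
      have h2 := Finset.sum_range_add (fun j => dist (z j) (z (j + 1))) i (k - i)
      rw [hik'] at h2
      have h2' : S k = S i + ∑ j ∈ range (k - i), dist (z (i + j)) (z (i + j + 1)) := h2
      linarith
    have hDε : S k < dist x y + ε / 3 := hsum
    have hA : 2 * dist x (z i) < dist x y + ε := by
      have : 2 * S i ≤ S k := hPi
      linarith
    have hB : 2 * dist (z i) y < dist x y + ε := by
      rcases eq_or_lt_of_le hik with h | h
      · have : z i = y := by rw [h, hzk]
        rw [this, dist_self]
        have := dist_nonneg (x := x) (y := y)
        linarith
      · have hnP : ¬ P (i + 1) := Nat.findGreatest_is_greatest (n := k) (by omega) (by omega)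
        have hgt : S k < 2 * S (i + 1) := by
          simp only [hPdef, not_le] at hnP; linarith
        have hSsucc : S (i + 1) = S i + dist (z i) (z (i + 1)) := by
          rw [hS]; simp [Finset.sum_range_succ]
        have hst : dist (z i) (z (i + 1)) < ε / 3 := hstep i h
        have : 2 * S i ≤ S k := hPi
        linarith
    simp only [Set.mem_setOf_eq]
    rcases max_cases (dist x (z i)) (dist (z i) y) with ⟨heq, _⟩ | ⟨heq, _⟩ <;>
      rw [heq] <;> linarith
  · intro H x y ε hε
    have H' : ∀ x y : X, ∀ ε > (0 : ℝ),
        ∃ z : X, 2 * max (dist x z) (dist z y) < dist x y + ε := by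
      intro a b δ hδ
      obtain ⟨z, hz⟩ := H a b δ hδ
      exact ⟨z, hz⟩
    obtain ⟨n, hn⟩ := pow_unbounded_of_one_lt ((dist x y + ε) / ε) (by norm_num : (1 : ℝ) < 2)
    obtain ⟨z, hz0, hzk, hstep, hsum⟩ := chain_claim H' n x y ε hε
    refine ⟨2 ^ n, z, hz0, hzk, ?_, hsum⟩
    intro j hj
    have hP : (0 : ℝ) < 2 ^ n := by positivity
    have : (dist x y + ε) / 2 ^ n < ε := by
      rw [div_lt_iff₀ hP]
      have := (div_lt_iff₀ hε).mp hn
      linarith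
    exact lt_trans (hstep j hj) this
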